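/- arXiv:1904.02764 — 4 statements merged into one kernel-verified Lean document; each statement's English description precedes it below -/
import Mathlib

section
/- Let G be a finite abelian group and let χ₁, χ₂ : G → ℂˣ be two complex irreducible characters of G. Then χ₁ and χ₂ are Galois-associated (i.e., there exists a field automorphism σ of ℂ such that χ₂ = σ ∘ χ₁) if and only if ker χ₁ = ker χ₂. -/
set_option maxHeartbeats 1000000 in
set_option synthInstance.maxHeartbeats 400000 in
open MvPolynomial in
lemma extend_to_complex (E : IntermediateField ℚ ℂ) (e : E ≃ₐ[ℚ] E) :
    ∃ σ : ℂ ≃+* ℂ, ∀ x : E, σ (x : ℂ) = ((e x : E) : ℂ) := by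
  obtain ⟨s, hs⟩ := exists_isTranscendenceBasis (E : Type _)
    ℂ
  haveI := IsAlgClosed.isAlgClosure_of_transcendence_basis _ hs
  let m : MvPolynomial s E ≃+* MvPolynomial s E := MvPolynomial.mapEquiv s e.toRingEquiv
  let φ : Algebra.adjoin E (Set.range ((↑) : s → ℂ)) ≃+*
      Algebra.adjoin E (Set.range ((↑) : s → ℂ)) :=
    (hs.1.aevalEquiv.symm.toRingEquiv.trans m).trans hs.1.aevalEquiv.toRingEquiv
  have hφ : ∀ x : E, φ (algebraMap E _ x) = algebraMap E _ (e x) := by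
    intro x
    have h1 : hs.1.aevalEquiv.symm (algebraMap E _ x) = MvPolynomial.C x := by
      apply hs.1.aevalEquiv.injective
      simp [AlgEquiv.commutes]
    simp only [φ, RingEquiv.trans_apply, AlgEquiv.toRingEquiv_eq_coe,
      AlgEquiv.coe_ringEquiv, h1]
    have h2 : m (MvPolynomial.C x) = MvPolynomial.C (e x) := by
      simp [m]
    rw [h2]
    exact (hs.1.aevalEquiv).commutes (e x)
  refine ⟨IsAlgClosure.equivOfEquiv ℂ ℂ φ, fun x => ?_⟩
  have : (x : ℂ) = algebraMap (Algebra.adjoin E (Set.range ((↑) : s → ℂ))) ℂ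
      (algebraMap E _ x) := by
    rw [← IsScalarTower.algebraMap_apply]; rfl
  rw [this, IsAlgClosure.equivOfEquiv_algebraMap, hφ, ← IsScalarTower.algebraMap_apply]
  rfl

open Polynomial IntermediateField in
lemma aut_of_primitive_root {n i : ℕ} (hn : 0 < n) {ζ : ℂ} (hζ : IsPrimitiveRoot ζ n)
    (hi : i.Coprime n) : ∃ σ : ℂ ≃+* ℂ, σ ζ = ζ ^ i := by
  have hint : IsIntegral ℚ ζ := (hζ.isIntegral hn).tower_top
  haveI := IntermediateField.adjoin.finiteDimensional hint
  haveI : Algebra.IsAlgebraic ℚ ℚ⟮ζ⟯ := Algebra.IsAlgebraic.of_finite ℚ _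
  set gen := IntermediateField.AdjoinSimple.gen ℚ ζ with hgen
  have hy : aeval (gen ^ i) (minpoly ℚ (IntermediateField.adjoin.powerBasis hint).gen) = 0 := by
    have hpbgen : (IntermediateField.adjoin.powerBasis hint).gen = gen := rfl
    rw [hpbgen, show minpoly ℚ gen = minpoly ℚ ζ by
      rw [← minpoly.algebraMap_eq (algebraMap ℚ⟮ζ⟯ ℂ).injective, IntermediateField.AdjoinSimple.algebraMap_gen]]
    apply (algebraMap ℚ⟮ζ⟯ ℂ).injective
    rw [map_zero, ← aeval_algebraMap_apply]
    have : algebraMap ℚ⟮ζ⟯ ℂ (gen ^ i) = ζ ^ i := by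
      rw [map_pow, IntermediateField.AdjoinSimple.algebraMap_gen]
    rw [this, ← cyclotomic_eq_minpoly_rat hζ hn, aeval_def, eval₂_eq_eval_map,
      map_cyclotomic]
    exact (hζ.pow_of_coprime i hi).isRoot_cyclotomic hn
  let f := (IntermediateField.adjoin.powerBasis hint).lift (gen ^ i) hy
  let e := AlgEquiv.ofBijective f (Algebra.IsAlgebraic.algHom_bijective f)
  obtain ⟨σ, hσ⟩ := extend_to_complex ℚ⟮ζ⟯ e
  refine ⟨σ, ?_⟩
  have h1 : (gen : ℂ) = ζ := rfl
  have h2 : e gen = gen ^ i := PowerBasis.lift_gen _ _ hy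
  calc σ ζ = σ (gen : ℂ) := by rw [h1]
    _ = ((e gen : ℚ⟮ζ⟯) : ℂ) := hσ gen
    _ = ζ ^ i := by rw [h2]; push_cast; rw [h1]

/-- Two complex irreducible characters of a finite abelian group
are Galois-associated iff they have the same kernel. -/
theorem galois_associated_iff_ker_eq {G : Type*} [CommGroup G] [Fintype G]
    (χ₁ χ₂ : G →* ℂˣ) :
    (∃ σ : ℂ ≃+* ℂ, ∀ g : G, (χ₂ g : ℂ) = σ (χ₁ g : ℂ)) ↔ χ₁.ker = χ₂.ker := by
  constructor
  · rintro ⟨σ, hσ⟩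
    ext g
    simp only [MonoidHom.mem_ker]
    rw [← Units.val_eq_one, ← Units.val_eq_one, hσ g,
      map_eq_one_iff σ σ.injective]
  · intro hker
    let ψ₁ := QuotientGroup.kerLift χ₁
    have hψ₁ : Function.Injective ψ₁ := QuotientGroup.kerLift_injective χ₁
    let ψ₂ : G ⧸ χ₁.ker →* ℂˣ :=
      QuotientGroup.lift χ₁.ker χ₂ (fun x hx => MonoidHom.mem_ker.mp (hker ▸ hx))
    have hψ₂mk : ∀ g : G, ψ₂ (QuotientGroup.mk g) = χ₂ g := fun g => rfl
    have hψ₂ : Function.Injective ψ₂ := by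
      rw [injective_iff_map_eq_one]
      intro a ha
      induction a using QuotientGroup.induction_on with
      | H g =>
        rw [hψ₂mk] at ha
        rw [QuotientGroup.eq_one_iff, hker]
        exact MonoidHom.mem_ker.mpr ha
    haveI : IsCyclic (G ⧸ χ₁.ker) :=
      isCyclic_of_subgroup_isDomain ((Units.coeHom ℂ).comp ψ₁)
        (fun a b h => hψ₁ (Units.ext h))
    obtain ⟨q, hq⟩ := IsCyclic.exists_generator (α := G ⧸ χ₁.ker)
    set n := orderOf q with hn
    have hnpos : 0 < n := orderOf_pos q
    haveI : NeZero n := ⟨hnpos.ne'⟩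
    have hζ₁ : IsPrimitiveRoot (ψ₁ q) n := by
      have h := IsPrimitiveRoot.orderOf (ψ₁ q)
      rwa [orderOf_injective ψ₁ hψ₁ q] at h
    have hζ₂ : IsPrimitiveRoot (ψ₂ q) n := by
      have h := IsPrimitiveRoot.orderOf (ψ₂ q)
      rwa [orderOf_injective ψ₂ hψ₂ q] at h
    obtain ⟨i, hilt, hicop, hipow⟩ := (hζ₁.isPrimitiveRoot_iff').mp hζ₂
    have hζ : IsPrimitiveRoot ((ψ₁ q : ℂˣ) : ℂ) n := IsPrimitiveRoot.coe_units_iff.mpr hζ₁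
    obtain ⟨σ, hσ⟩ := aut_of_primitive_root hnpos hζ hicop
    refine ⟨σ, fun g => ?_⟩
    obtain ⟨m, hm⟩ := (mem_powers_iff_mem_zpowers).mpr (hq (QuotientGroup.mk g))
    have hm' : q ^ m = (QuotientGroup.mk g : G ⧸ χ₁.ker) := hm
    have h1 : χ₁ g = (ψ₁ q) ^ m := by
      rw [← QuotientGroup.kerLift_mk χ₁ g, ← hm', map_pow]
    have h2 : χ₂ g = ((ψ₁ q) ^ i) ^ m := by
      rw [hipow, ← hψ₂mk, ← hm', map_pow]
    rw [h1, h2]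
    push_cast
    rw [map_pow, hσ, ← pow_mul]
end

section
/- Let G be a finite abelian group. The map χ ↦ ker χ induces a bijection from the set of Galois-equivalence classes of complex irreducible characters of G (the quotient of the set of group homomorphisms G → ℂˣ by the relation of being Galois-associated) onto the set of subgroups K of G such that the quotient group G/K is cyclic. -/
set_option maxHeartbeats 1000000
set_option synthInstance.maxHeartbeats 400000

/-- The relation of being Galois-associated on complex characters of `G`. -/
def galoisSetoid (G : Type*) [CommGroup G] : Setoid (G →* ℂˣ) where
  r χ₁ χ₂ := ∃ σ : ℂ ≃+* ℂ, ∀ g : G, (χ₂ g : ℂ) = σ (χ₁ g : ℂ)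
  iseqv := by
    constructor
    · exact fun χ => ⟨RingEquiv.refl ℂ, fun g => rfl⟩
    · rintro χ₁ χ₂ ⟨σ, hσ⟩
      exact ⟨σ.symm, fun g => by rw [hσ g, σ.symm_apply_apply]⟩
    · rintro χ₁ χ₂ χ₃ ⟨σ, hσ⟩ ⟨τ, hτ⟩
      exact ⟨σ.trans τ, fun g => by rw [hτ g, hσ g]; rfl⟩

open IntermediateField Polynomial in
lemma exists_complex_aut {m k : ℕ} (hm : 0 < m) {ζ : ℂ} (hζ : IsPrimitiveRoot ζ m)
    (hk : Nat.Coprime k m) : ∃ σ : ℂ ≃+* ℂ, σ ζ = ζ ^ k := by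
  have hζk : IsPrimitiveRoot (ζ ^ k) m := hζ.pow_of_coprime k hk
  have hint : IsIntegral ℚ ζ := (hζ.isIntegral hm).tower_top
  have hmin : minpoly ℚ ζ = minpoly ℚ (ζ ^ k) := by
    rw [← Polynomial.cyclotomic_eq_minpoly_rat hζ hm,
      Polynomial.cyclotomic_eq_minpoly_rat hζk hm]
  set F := ℚ⟮ζ⟯ with hF
  haveI : FiniteDimensional ℚ F := adjoin.finiteDimensional hint
  have hmemk : ζ ^ k ∈ F := pow_mem (mem_adjoin_simple_self ℚ ζ) k
  let pb := adjoin.powerBasis hint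
  have hmin2 : minpoly ℚ pb.gen = minpoly ℚ ζ := by
    have : pb.gen = AdjoinSimple.gen ℚ ζ := rfl
    rw [this]
    exact minpoly_eq (AdjoinSimple.gen ℚ ζ)
  have hy : Polynomial.aeval (⟨ζ ^ k, hmemk⟩ : F) (minpoly ℚ pb.gen) = 0 := by
    have hinj : Function.Injective (algebraMap F ℂ) := (algebraMap F ℂ).injective
    apply hinj
    rw [map_zero, ← Polynomial.aeval_algebraMap_apply]
    have : algebraMap F ℂ (⟨ζ ^ k, hmemk⟩ : F) = ζ ^ k := rfl
    rw [this, hmin2, hmin]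
    exact minpoly.aeval ℚ (ζ ^ k)
  let φ : F →ₐ[ℚ] F := pb.lift (⟨ζ ^ k, hmemk⟩ : F) hy
  let τ : F ≃ₐ[ℚ] F := AlgEquiv.ofBijective φ φ.bijective
  have hτgen : τ (AdjoinSimple.gen ℚ ζ) = ⟨ζ ^ k, hmemk⟩ := pb.lift_gen _ hy
  -- transcendence basis
  obtain ⟨s, hs⟩ := exists_isTranscendenceBasis F ℂ
  letI := IsAlgClosed.isAlgClosure_of_transcendence_basis _ hs
  set A := Algebra.adjoin F (Set.range ((↑) : s → ℂ)) with hA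
  let e₀ : MvPolynomial s F ≃+* MvPolynomial s F := MvPolynomial.mapEquiv s τ.toRingEquiv
  let e : A ≃+* A :=
    (hs.1.aevalEquiv.symm.toRingEquiv.trans e₀).trans hs.1.aevalEquiv.toRingEquiv
  have he : ∀ x : F, e (algebraMap F A x) = algebraMap F A (τ x) := by
    intro x
    show hs.1.aevalEquiv (e₀ (hs.1.aevalEquiv.symm (algebraMap F A x))) = _
    have h1 : hs.1.aevalEquiv.symm (algebraMap F A x) = MvPolynomial.C x := by
      rw [← MvPolynomial.algebraMap_eq]; exact hs.1.aevalEquiv.symm.commutes x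
    rw [h1]
    have h2 : e₀ (MvPolynomial.C x) = MvPolynomial.C (τ x) := MvPolynomial.map_C _ x
    rw [h2, ← MvPolynomial.algebraMap_eq]
    exact hs.1.aevalEquiv.commutes (τ x)
  let σ : ℂ ≃+* ℂ := IsAlgClosure.equivOfEquiv ℂ ℂ e
  refine ⟨σ, ?_⟩
  have hζA : ζ = algebraMap A ℂ (algebraMap F A (AdjoinSimple.gen ℚ ζ)) := by
    rw [← IsScalarTower.algebraMap_apply]
    rfl
  rw [hζA, IsAlgClosure.equivOfEquiv_algebraMap, he, hτgen,
    ← IsScalarTower.algebraMap_apply]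
  rfl

section Main
variable {G : Type*} [CommGroup G] [Fintype G]

lemma cyclic_quot (χ : G →* ℂˣ) : IsCyclic (G ⧸ χ.ker) := by
  haveI : Finite ↥χ.range := Finite.of_surjective
    (fun g : G => (⟨χ g, ⟨g, rfl⟩⟩ : χ.range)) (by rintro ⟨y, g, rfl⟩; exact ⟨g, rfl⟩)
  exact isCyclic_of_surjective _ (QuotientGroup.quotientKerEquivRange χ).symm.surjective

lemma ker_eq_galois {χ₁ χ₂ : G →* ℂˣ} (h : χ₁.ker = χ₂.ker) :
    ∃ σ : ℂ ≃+* ℂ, ∀ g : G, (χ₂ g : ℂ) = σ (χ₁ g : ℂ) := by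
  set K := χ₁.ker with hK
  haveI : Finite (G ⧸ K) := Quotient.finite _
  haveI := cyclic_quot χ₁
  obtain ⟨x, hx⟩ := (cyclic_quot χ₁).exists_generator
  obtain ⟨g₀, hg₀⟩ := QuotientGroup.mk_surjective x
  set m := orderOf x with hmdef
  have hm : 0 < m := orderOf_pos x
  haveI : NeZero m := ⟨hm.ne'⟩
  have key2 : ∀ χ : G →* ℂˣ, χ.ker = K → orderOf (χ g₀) = m := by
    intro χ hker
    rw [orderOf_eq_orderOf_iff]
    intro n
    have : χ g₀ ^ n = 1 ↔ (QuotientGroup.mk g₀ : G ⧸ K) ^ n = 1 := by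
      rw [← map_pow, ← QuotientGroup.mk_pow, QuotientGroup.eq_one_iff, ← hker]
      exact MonoidHom.mem_ker.symm
    rw [this, hg₀]
  have hp₁ : IsPrimitiveRoot (χ₁ g₀) m := by
    have := IsPrimitiveRoot.orderOf (χ₁ g₀); rwa [key2 χ₁ rfl] at this
  have hp₂ : IsPrimitiveRoot (χ₂ g₀) m := by
    have := IsPrimitiveRoot.orderOf (χ₂ g₀); rwa [key2 χ₂ h.symm] at this
  obtain ⟨k, -, hkcop, hk⟩ := (hp₁.isPrimitiveRoot_iff' ).mp hp₂
  have hp₁c : IsPrimitiveRoot ((χ₁ g₀ : ℂ)) m := IsPrimitiveRoot.coe_units_iff.mpr hp₁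
  obtain ⟨σ, hσ⟩ := exists_complex_aut hm hp₁c hkcop
  refine ⟨σ, fun g => ?_⟩
  obtain ⟨j, hj⟩ := hx (QuotientGroup.mk g)
  have hmem : (g₀ ^ j)⁻¹ * g ∈ K := by
    rw [← QuotientGroup.eq]
    rw [← hg₀] at hj
    rw [← hj, QuotientGroup.mk_zpow]
  have hval : ∀ χ : G →* ℂˣ, χ.ker = K → χ g = χ g₀ ^ j := by
    intro χ hker
    have h1 : χ ((g₀ ^ j)⁻¹ * g) = 1 := by rw [← hker] at hmem; exact hmem
    have : χ g = χ (g₀ ^ j) * χ ((g₀ ^ j)⁻¹ * g) := by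
      rw [← map_mul, mul_inv_cancel_left]
    rw [this, h1, mul_one, map_zpow]
  have hσg₀ : σ (χ₁ g₀ : ℂ) = (χ₂ g₀ : ℂ) := by
    rw [hσ, ← hk, Units.val_pow_eq_pow_val]
  rw [hval χ₁ rfl, hval χ₂ h.symm, Units.val_zpow_eq_zpow_val, Units.val_zpow_eq_zpow_val,
    map_zpow₀, hσg₀]

lemma exists_char (K : Subgroup G) (hK : IsCyclic (G ⧸ K)) :
    ∃ χ : G →* ℂˣ, χ.ker = K := by
  haveI : Finite (G ⧸ K) := Quotient.finite _
  set m := Nat.card (G ⧸ K) with hmdef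
  have hm : 0 < m := Nat.card_pos
  haveI : NeZero m := ⟨hm.ne'⟩
  have hcard : Nat.card (G ⧸ K) = Nat.card (rootsOfUnity m ℂ) := by
    rw [Complex.card_rootsOfUnity]
  let e : (G ⧸ K) ≃* rootsOfUnity m ℂ := mulEquivOfCyclicCardEq hcard
  refine ⟨((rootsOfUnity m ℂ).subtype.comp e.toMonoidHom).comp (QuotientGroup.mk' K), ?_⟩
  ext g
  rw [MonoidHom.mem_ker]
  simp only [MonoidHom.comp_apply, QuotientGroup.mk'_apply]
  rw [map_eq_one_iff _ (Subgroup.subtype_injective _), map_eq_one_iff e.toMonoidHom e.injective,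
    QuotientGroup.eq_one_iff]

end Main

/-- For a finite abelian group `G`, the map `χ ↦ ker χ` induces a
bijection from the set of Galois-equivalence classes of complex irreducible characters
of `G` onto the set of subgroups `K ⊆ G` with `G ⧸ K` cyclic. -/
theorem galois_classes_equiv_cyclic_quotient_subgroups
    (G : Type*) [CommGroup G] [Fintype G] :
    ∃ e : Quotient (galoisSetoid G) ≃ {K : Subgroup G // IsCyclic (G ⧸ K)},
      ∀ χ : G →* ℂˣ, (e (Quotient.mk (galoisSetoid G) χ) : Subgroup G) = χ.ker := by
  classical
  let f : (G →* ℂˣ) → {K : Subgroup G // IsCyclic (G ⧸ K)} := fun χ => ⟨χ.ker, cyclic_quot χ⟩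
  have hresp : ∀ χ₁ χ₂ : G →* ℂˣ, (galoisSetoid G).r χ₁ χ₂ → f χ₁ = f χ₂ := by
    rintro χ₁ χ₂ ⟨σ, hσ⟩
    refine Subtype.ext ?_
    ext g
    simp only [f, MonoidHom.mem_ker]
    constructor <;> intro hg
    · have : (χ₂ g : ℂ) = 1 := by rw [hσ g, hg]; simp
      exact Units.ext this
    · have : σ (χ₁ g : ℂ) = σ 1 := by rw [← hσ g, hg]; simp
      exact Units.ext (σ.injective this)
  let F : Quotient (galoisSetoid G) → {K : Subgroup G // IsCyclic (G ⧸ K)} :=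
    Quotient.lift f hresp
  have hinj : Function.Injective F := by
    refine Quotient.ind₂ ?_
    intro χ₁ χ₂ hF
    refine Quotient.sound ?_
    have : χ₁.ker = χ₂.ker := congrArg Subtype.val hF
    exact ker_eq_galois this
  have hsurj : Function.Surjective F := by
    rintro ⟨K, hK⟩
    obtain ⟨χ, hχ⟩ := exists_char K hK
    exact ⟨Quotient.mk _ χ, Subtype.ext hχ⟩
  exact ⟨Equiv.ofBijective F ⟨hinj, hsurj⟩, fun χ => rfl⟩
end

section
/- Let G be a finite abelian group, K a subgroup of G, and θ : G → ℂˣ a group homomorphism. Then ker θ = K if and only if the following two conditions hold: (a) K ⊆ ker θ; and (b) for every subgroup H of G with K ⊆ H and [H : K] prime, H is not contained in ker θ. -/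
/-- Let `G` be a finite abelian group, `K` a subgroup and
`θ : G → ℂˣ` a character. Then `ker θ = K` iff `K ⊆ ker θ` and for every subgroup
`H` with `K ⊆ H` and `[H : K]` prime, `H` is not contained in `ker θ`. -/
theorem ker_eq_iff_trivial_on_K_nontrivial_on_prime_overgroups
    {G : Type*} [CommGroup G] [Fintype G] (K : Subgroup G) (θ : G →* ℂˣ) :
    θ.ker = K ↔
      (K ≤ θ.ker ∧
        ∀ H : Subgroup G, K ≤ H → (K.relIndex H).Prime → ¬ H ≤ θ.ker) := by
  constructor
  · rintro rfl
    refine ⟨le_rfl, fun H hKH hp hHK => ?_⟩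
    have : H = θ.ker := le_antisymm hHK hKH
    subst this
    rw [Subgroup.relIndex_self] at hp
    exact hp.one_lt.ne' rfl
  · rintro ⟨hK, hb⟩
    by_contra hne
    have hlt : K < θ.ker := lt_of_le_of_ne hK (fun h => hne h.symm)
    obtain ⟨x, hxker, hxK⟩ := SetLike.exists_of_lt hlt
    set f := QuotientGroup.mk' K with hf
    have hfker : f.ker = K := QuotientGroup.ker_mk' K
    have hy : f x ≠ 1 := by
      intro h
      exact hxK (hfker ▸ (MonoidHom.mem_ker.mpr h))
    have hn : 1 < orderOf (f x) := by
      rcases Nat.lt_or_ge 1 (orderOf (f x)) with h | h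
      · exact h
      · interval_cases h' : orderOf (f x)
        · exact absurd h' (orderOf_pos (f x)).ne'
        · exact absurd (orderOf_eq_one_iff.mp h') hy
    obtain ⟨p, hp, hpd⟩ := (orderOf (f x)).exists_prime_and_dvd hn.ne'
    set z := (f x) ^ (orderOf (f x) / p) with hz
    have hoz : orderOf z = p := by
      rw [hz, orderOf_pow_orderOf_div (orderOf_pos (f x)).ne' hpd]
    set H := Subgroup.comap f (Subgroup.zpowers z) with hH
    have hKH : K ≤ H := by
      intro g hg
      have hg' : g ∈ f.ker := hfker.symm ▸ hg
      have : f g = 1 := MonoidHom.mem_ker.mp hg'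
      rw [hH, Subgroup.mem_comap, this]
      exact one_mem _
    have hrel : K.relIndex H = p := by
      rw [← hfker, Subgroup.relIndex_ker]
      have hmap : H.map f = Subgroup.zpowers z := by
        rw [hH, Subgroup.map_comap_eq,
          MonoidHom.range_eq_top_of_surjective f (QuotientGroup.mk'_surjective K),
          top_inf_eq]
      rw [hmap, Nat.card_zpowers, hoz]
    have hHker : H ≤ θ.ker := by
      intro g hg
      obtain ⟨k, hk⟩ := Subgroup.mem_comap.mp hg
      set w : G := (x ^ (orderOf (f x) / p)) ^ k with hw
      have hfw : f w = f g := by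
        rw [hw, map_zpow, map_pow, ← hz]; exact hk
      have hmem : g * w⁻¹ ∈ K := by
        rw [← hfker, MonoidHom.mem_ker, map_mul, map_inv, hfw, mul_inv_cancel]
      have h1 : g * w⁻¹ ∈ θ.ker := hK hmem
      have h2 : w ∈ θ.ker := Subgroup.zpow_mem _ (Subgroup.pow_mem _ hxker _) _
      have := mul_mem h1 h2
      rwa [inv_mul_cancel_right] at this
    exact hb H hKH (hrel ▸ hp) hHker
end

section
/- Let V be a finite-dimensional complex vector space and α : V → V a linear automorphism of finite order d ≥ 1. Let 1 ≤ d₁ < d₂ < ⋯ < d_s be the distinct multiplicative orders of the eigenvalues of α. Define subspaces recursively by Y₀ := V and, for i = 1, …, s, B_i := ker(id − α^{d_i}) ∩ Y_{i−1} and Y_i := (id − α^{d_i})(Y_{i−1}) (the image of Y_{i−1} under id − α^{d_i}). Then V is the internal direct sum of B₁, …, B_s: the addition map B₁ × ⋯ × B_s → V, (v₁, …, v_s) ↦ v₁ + ⋯ + v_s, is a linear isomorphism. Moreover, for each i the eigenvalues of the restriction of α to B_i are exactly the eigenvalues of α of multiplicative order d_i. -/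
section Aux

variable {V : Type*} [AddCommGroup V] [Module ℂ V]

private lemma roan_pow_mem_of_mem {β : V →ₗ[ℂ] V} {Y : Submodule ℂ V}
    (hY : ∀ x ∈ Y, β x ∈ Y) : ∀ (k : ℕ), ∀ x ∈ Y, (β ^ k) x ∈ Y := by
  intro k
  induction k with
  | zero => intro x hx; simpa using hx
  | succ n ih =>
    intro x hx
    rw [pow_succ, Module.End.mul_apply]
    exact ih _ (hY x hx)

private lemma roan_eig_pow {α : V →ₗ[ℂ] V} {μ : ℂ} {v : V} (h : α v = μ • v) :
    ∀ k : ℕ, (α ^ k) v = μ ^ k • v := by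
  intro k
  induction k with
  | zero => simp
  | succ n ih =>
    rw [pow_succ, Module.End.mul_apply, h, map_smul, ih, smul_smul, ← pow_succ']

private lemma roan_ker_inf_map (β : V →ₗ[ℂ] V) (d : ℕ) (hd : 0 < d) (hβ : β ^ d = 1)
    (Y : Submodule ℂ V) :
    LinearMap.ker (1 - β) ⊓ Submodule.map (1 - β) Y = ⊥ := by
  rw [eq_bot_iff]
  rintro v hv
  obtain ⟨hker, y, -, rfl⟩ := Submodule.mem_inf.mp hv |>.imp id (fun h => Submodule.mem_map.mp h)
  set P : V →ₗ[ℂ] V := ∑ k ∈ Finset.range d, β ^ k with hPdef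
  have hfix : β ((1 - β) y) = (1 - β) y := by
    have h0 : (1 - β) ((1 - β) y) = 0 := hker
    rw [LinearMap.sub_apply, Module.End.one_apply] at h0
    exact (sub_eq_zero.mp h0).symm
  have hpow : ∀ k : ℕ, (β ^ k) ((1 - β) y) = (1 - β) y := by
    intro k
    induction k with
    | zero => simp
    | succ n ih => rw [pow_succ', Module.End.mul_apply, ih, hfix]
  have hP0 : P * (1 - β) = 0 := by
    calc P * (1 - β) = -(P * (β - 1)) := by rw [← mul_neg, neg_sub]
      _ = -(β ^ d - 1) := by rw [hPdef, geom_sum_mul]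
      _ = 0 := by rw [hβ, sub_self, neg_zero]
  have hPv : P ((1 - β) y) = d • ((1 - β) y) := by
    rw [hPdef, LinearMap.sum_apply,
      Finset.sum_congr rfl fun k _ => hpow k, Finset.sum_const, Finset.card_range]
  have hzero : d • ((1 - β) y) = 0 := by
    rw [← hPv, ← Module.End.mul_apply, hP0, LinearMap.zero_apply]
  have hd' : (d : ℂ) ≠ 0 := Nat.cast_ne_zero.mpr hd.ne'
  rw [← Nat.cast_smul_eq_nsmul ℂ] at hzero
  rw [Submodule.mem_bot]
  rcases smul_eq_zero.mp hzero with h | h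
  · exact absurd h hd'
  · exact h

private lemma roan_le_ker_sup_map (β : V →ₗ[ℂ] V) (d : ℕ) (hd : 0 < d) (hβ : β ^ d = 1)
    (Y : Submodule ℂ V) (hY : ∀ x ∈ Y, β x ∈ Y) :
    Y ≤ (LinearMap.ker (1 - β) ⊓ Y) ⊔ Submodule.map (1 - β) Y := by
  intro y hy
  have hd' : (d : ℂ) ≠ 0 := Nat.cast_ne_zero.mpr hd.ne'
  set c : ℂ := (d : ℂ)⁻¹ with hc
  set S : V →ₗ[ℂ] V := ∑ k ∈ Finset.range d, β ^ k with hSdef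
  set P : V →ₗ[ℂ] V := c • S with hPdef
  set Q : V →ₗ[ℂ] V := c • ∑ k ∈ Finset.range d, ∑ j ∈ Finset.range k, β ^ j with hQdef
  have hSmul : (1 - β) * S = 0 := by
    calc (1 - β) * S = -((β - 1) * S) := by rw [← neg_sub β (1 : V →ₗ[ℂ] V), neg_mul]
      _ = -(β ^ d - 1) := by rw [hSdef, mul_geom_sum]
      _ = 0 := by rw [hβ, sub_self, neg_zero]
  have hPker : (1 - β) (P y) = 0 := by
    have h0 : (1 - β) * P = 0 := by rw [hPdef, mul_smul_comm, hSmul, smul_zero]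
    rw [← Module.End.mul_apply, h0, LinearMap.zero_apply]
  have hPY : P y ∈ Y := by
    rw [hPdef, LinearMap.smul_apply, hSdef, LinearMap.sum_apply]
    exact Y.smul_mem _ (Submodule.sum_mem _ fun k _ => roan_pow_mem_of_mem hY k y hy)
  have hQY : Q y ∈ Y := by
    rw [hQdef, LinearMap.smul_apply, LinearMap.sum_apply]
    refine Y.smul_mem _ (Submodule.sum_mem _ fun k _ => ?_)
    rw [LinearMap.sum_apply]
    exact Submodule.sum_mem _ fun j _ => roan_pow_mem_of_mem hY j y hy
  have hone : c • (d • (1 : V →ₗ[ℂ] V)) = 1 := by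
    rw [← Nat.cast_smul_eq_nsmul ℂ, smul_smul, hc, inv_mul_cancel₀ hd', one_smul]
  have hkey : (1 - β) * Q = 1 - P := by
    have h1 : ∀ k : ℕ, (1 - β) * ∑ j ∈ Finset.range k, β ^ j = 1 - β ^ k := by
      intro k
      calc (1 - β) * ∑ j ∈ Finset.range k, β ^ j
          = -((β - 1) * ∑ j ∈ Finset.range k, β ^ j) := by
            rw [← neg_sub β (1 : V →ₗ[ℂ] V), neg_mul]
        _ = -(β ^ k - 1) := by rw [mul_geom_sum]
        _ = 1 - β ^ k := neg_sub _ _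
    rw [hQdef, mul_smul_comm, Finset.mul_sum]
    simp only [h1]
    rw [Finset.sum_sub_distrib, Finset.sum_const, Finset.card_range, smul_sub, hone,
      ← hSdef, ← hPdef]
  have hdecomp : y = P y + (1 - β) (Q y) := by
    rw [← Module.End.mul_apply, hkey, LinearMap.sub_apply, Module.End.one_apply]
    abel
  have h1 : P y ∈ LinearMap.ker (1 - β) ⊓ Y :=
    Submodule.mem_inf.mpr ⟨LinearMap.mem_ker.mpr hPker, hPY⟩
  have h2 : (1 - β) (Q y) ∈ Submodule.map (1 - β) Y := ⟨Q y, hQY, rfl⟩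
  exact hdecomp ▸ Submodule.add_mem_sup h1 h2

end Aux

/-- (Roan's decomposition, linear-algebra form.) Let `α` be a linear
automorphism of finite order `d` of a finite-dimensional complex vector space `V`, and
let `d₁ < ⋯ < d_s` be the distinct multiplicative orders of the eigenvalues of `α`.
With `Y₀ = V`, `B_i = ker(1 - α^{d_i}) ∩ Y_{i-1}` and `Y_i = (1 - α^{d_i})(Y_{i-1})`,
the space `V` is the internal direct sum of `B₁, …, B_s`, and the eigenvalues of the
restriction of `α` to `B_i` are exactly the eigenvalues of `α` of order `d_i`. -/
theorem roan_linear_decomposition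
    {V : Type*} [AddCommGroup V] [Module ℂ V] [FiniteDimensional ℂ V]
    (α : V →ₗ[ℂ] V) (d : ℕ) (hd : 0 < d) (hα : α ^ d = 1)
    (s : ℕ) (ds : Fin s → ℕ) (hpos : ∀ i, 0 < ds i) (hmono : StrictMono ds)
    (horders : ∀ n : ℕ,
      (∃ μ : ℂ, Module.End.HasEigenvalue α μ ∧ orderOf μ = n) ↔ ∃ i, ds i = n)
    (Y : ℕ → Submodule ℂ V) (B : Fin s → Submodule ℂ V)
    (hY0 : Y 0 = ⊤)
    (hB : ∀ i : Fin s, B i = LinearMap.ker (1 - α ^ ds i) ⊓ Y i.val)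
    (hYsucc : ∀ i : Fin s, Y (i.val + 1) = Submodule.map (1 - α ^ ds i) (Y i.val)) :
    DirectSum.IsInternal B ∧
    ∀ i : Fin s, ∀ μ : ℂ,
      (∃ v ∈ B i, v ≠ 0 ∧ α v = μ • v) ↔
        (Module.End.HasEigenvalue α μ ∧ orderOf μ = ds i) := by
  classical
  have hβd : ∀ i : Fin s, (α ^ ds i) ^ d = 1 := by
    intro i
    rw [← pow_mul, mul_comm, pow_mul, hα, one_pow]
  have hcomm : ∀ i : Fin s, α * (1 - α ^ ds i) = (1 - α ^ ds i) * α := by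
    intro i
    rw [mul_sub, sub_mul, mul_one, one_mul, ← pow_succ, ← pow_succ']
  -- invariance of the `Y n` under `α`
  have hYinv : ∀ n, n ≤ s → ∀ x ∈ Y n, α x ∈ Y n := by
    intro n
    induction n with
    | zero => intro _ x _; rw [hY0]; exact Submodule.mem_top
    | succ n ih =>
      intro hn x hx
      have hns : n < s := hn
      have hYs' : Y (n + 1) = Submodule.map (1 - α ^ ds ⟨n, hns⟩) (Y n) := hYsucc ⟨n, hns⟩
      rw [hYs'] at hx ⊢
      obtain ⟨y, hy, rfl⟩ := hx
      refine ⟨α y, ih (le_of_lt hns) y hy, ?_⟩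
      rw [← Module.End.mul_apply, ← hcomm ⟨n, hns⟩, Module.End.mul_apply]
  have hYinvp : ∀ n, n ≤ s → ∀ k : ℕ, ∀ x ∈ Y n, (α ^ k) x ∈ Y n :=
    fun n hn => roan_pow_mem_of_mem (fun x hx => hYinv n hn x hx)
  have hYstep : ∀ n, n < s → Y (n + 1) ≤ Y n := by
    intro n hns x hx
    have hYs' : Y (n + 1) = Submodule.map (1 - α ^ ds ⟨n, hns⟩) (Y n) := hYsucc ⟨n, hns⟩
    rw [hYs'] at hx
    obtain ⟨y, hy, rfl⟩ := hx
    rw [LinearMap.sub_apply, Module.End.one_apply]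
    exact Submodule.sub_mem _ hy (hYinvp n (le_of_lt hns) (ds ⟨n, hns⟩) y hy)
  have hYle : ∀ m n, m ≤ n → n ≤ s → Y n ≤ Y m := by
    intro m n
    induction n with
    | zero => intro h _; rw [Nat.le_zero.mp h]
    | succ n ih =>
      intro hmn hns
      rcases Nat.eq_or_lt_of_le hmn with h | h
      · subst h; exact le_rfl
      · exact le_trans (hYstep n hns) (ih (Nat.lt_succ_iff.mp h) (Nat.le_of_succ_le hns))
  have hdisj : ∀ i : Fin s, ∀ v : V, v ∈ LinearMap.ker (1 - α ^ ds i) →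
      v ∈ Y (i.val + 1) → v = 0 := by
    intro i v h1 h2
    rw [hYsucc i] at h2
    have hbot := roan_ker_inf_map (α ^ ds i) d hd (hβd i) (Y i.val)
    have hv : v ∈ (⊥ : Submodule ℂ V) := hbot ▸ Submodule.mem_inf.mpr ⟨h1, h2⟩
    exact (Submodule.mem_bot ℂ).mp hv
  -- only the trivial finite family sums to zero
  have hsum0 : ∀ v : Fin s → V, (∀ j, v j ∈ B j) → ∑ j, v j = 0 → ∀ j, v j = 0 := by
    intro v hv hsum
    have key : ∀ n : ℕ, ∀ j : Fin s, j.val = n → v j = 0 := by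
      intro n
      induction n using Nat.strong_induction_on with
      | _ n ih =>
        intro j hj
        have hzero : ∀ k : Fin s, k < j → v k = 0 := fun k hk =>
          ih k.val (hj ▸ hk) k rfl
        have h1 : ∑ k ∈ Finset.univ.filter (fun k => j ≤ k), v k = 0 := by
          rw [Finset.sum_subset (Finset.filter_subset _ _)
            (fun k _ hk => hzero k (not_le.mp
              (fun hle => hk (Finset.mem_filter.mpr ⟨Finset.mem_univ k, hle⟩))))]
          exact hsum
        have hsplit : Finset.univ.filter (fun k => j ≤ k)
            = insert j (Finset.univ.filter (fun k => j < k)) := by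
          ext k
          simp only [Finset.mem_filter, Finset.mem_univ, true_and, Finset.mem_insert]
          constructor
          · intro h
            rcases eq_or_lt_of_le h with h' | h'
            · exact Or.inl h'.symm
            · exact Or.inr h'
          · rintro (rfl | h)
            · exact le_refl _
            · exact le_of_lt h
        rw [hsplit, Finset.sum_insert (by simp)] at h1
        have hmem : v j ∈ Y (j.val + 1) := by
          have hvj : v j = -∑ k ∈ Finset.univ.filter (fun k => j < k), v k :=
            eq_neg_of_add_eq_zero_left h1
          rw [hvj]
          refine Submodule.neg_mem _ (Submodule.sum_mem _ fun k hk => ?_)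
          have hk' : j < k := (Finset.mem_filter.mp hk).2
          have h2 : v k ∈ Y k.val := by
            have h3 := hv k
            rw [hB k] at h3
            exact (Submodule.mem_inf.mp h3).2
          exact hYle (j.val + 1) k.val (Nat.succ_le_of_lt (Fin.lt_def.mp hk')) k.isLt.le h2
        have hBj := hv j
        rw [hB j] at hBj
        exact hdisj j (v j) (Submodule.mem_inf.mp hBj).1 hmem
    exact fun j => key j.val j rfl
  -- independence
  have hindep : iSupIndep B := by
    rw [iSupIndep_def]
    intro i
    rw [Submodule.disjoint_def]
    intro x hxB hxSup
    have hx2 : x ∈ ⨆ j ∈ Finset.univ.erase i, B j := by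
      have hle : (⨆ (j) (_ : j ≠ i), B j) ≤ ⨆ j ∈ Finset.univ.erase i, B j := by
        refine iSup_le fun j => iSup_le fun hj => ?_
        exact le_iSup₂ (f := fun (j : Fin s) (_ : j ∈ Finset.univ.erase i) => B j) j
          (Finset.mem_erase.mpr ⟨hj, Finset.mem_univ j⟩)
      exact hle hxSup
    rw [Submodule.mem_iSup_finset_iff_exists_sum] at hx2
    obtain ⟨c, hc⟩ := hx2
    set w : Fin s → V := fun j => if j = i then -x else (c j : V) with hw
    have hwB : ∀ j, w j ∈ B j := by
      intro j
      by_cases h : j = i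
      · subst h; simp only [hw, if_pos rfl]; exact Submodule.neg_mem _ hxB
      · simp only [hw, if_neg h]; exact (c j).2
    have hwsum : ∑ j, w j = 0 := by
      rw [← Finset.add_sum_erase _ w (Finset.mem_univ i)]
      have heq : ∑ j ∈ Finset.univ.erase i, w j = ∑ j ∈ Finset.univ.erase i, (c j : V) :=
        Finset.sum_congr rfl fun j hj => by
          simp only [hw]; rw [if_neg (Finset.mem_erase.mp hj).1]
      rw [heq, hc]
      simp [hw]
    have hzero := hsum0 w hwB hwsum i
    simp only [hw, if_pos rfl] at hzero
    exact neg_eq_zero.mp hzero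
  -- Y s = ⊥
  have hYs : Y s = ⊥ := by
    by_contra hne
    haveI : Nontrivial (Y s) := Submodule.nontrivial_iff_ne_bot.mpr hne
    set αr : Y s →ₗ[ℂ] Y s := LinearMap.restrict α (fun x hx => hYinv s le_rfl x hx) with hαr
    obtain ⟨μ, hμ⟩ := Module.End.exists_eigenvalue αr
    obtain ⟨w, hw⟩ := hμ.exists_hasEigenvector
    have hv0 : (w : V) ≠ 0 := fun h => hw.2 (Subtype.ext h)
    have hv : α (w : V) = μ • (w : V) := by
      have h2 := congrArg Subtype.val hw.apply_eq_smul
      simpa [hαr, LinearMap.restrict_apply] using h2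
    have hvY : (w : V) ∈ Y s := w.2
    have heig : Module.End.HasEigenvalue α μ :=
      Module.End.hasEigenvalue_of_hasEigenvector
        (Module.End.hasEigenvector_iff.mpr ⟨Module.End.mem_eigenspace_iff.mpr hv, hv0⟩)
    obtain ⟨i, hi⟩ := (horders (orderOf μ)).mp ⟨μ, heig, rfl⟩
    have hker : (w : V) ∈ LinearMap.ker (1 - α ^ ds i) := by
      rw [LinearMap.mem_ker, LinearMap.sub_apply, Module.End.one_apply,
        roan_eig_pow hv (ds i), hi, pow_orderOf_eq_one, one_smul, sub_self]
    have hmem : (w : V) ∈ Y (i.val + 1) := hYle (i.val + 1) s i.isLt le_rfl hvY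
    exact hv0 (hdisj i (w : V) hker hmem)
  -- the B's fill up V
  have hsupY : ∀ k n, n + k = s → Y n ≤ ⨆ j, B j := by
    intro k
    induction k with
    | zero =>
      intro n hn
      rw [Nat.add_zero] at hn
      rw [hn, hYs]
      exact bot_le
    | succ k ih =>
      intro n hn
      have hns : n < s := by omega
      have hBi : B ⟨n, hns⟩ = LinearMap.ker (1 - α ^ ds ⟨n, hns⟩) ⊓ Y n := hB ⟨n, hns⟩
      have hYs' : Y (n + 1) = Submodule.map (1 - α ^ ds ⟨n, hns⟩) (Y n) := hYsucc ⟨n, hns⟩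
      have hle := roan_le_ker_sup_map (α ^ ds ⟨n, hns⟩) d hd (hβd ⟨n, hns⟩) (Y n)
        (fun x hx => hYinvp n hns.le (ds ⟨n, hns⟩) x hx)
      refine le_trans hle ?_
      rw [← hBi, ← hYs']
      exact sup_le (le_iSup B ⟨n, hns⟩) (ih (n + 1) (by omega))
  have htop : ⨆ j, B j = ⊤ := by
    rw [eq_top_iff, ← hY0]
    exact hsupY s 0 (by omega)
  refine ⟨DirectSum.isInternal_submodule_of_iSupIndep_of_iSup_eq_top hindep htop, ?_⟩
  intro i μ
  constructor
  · rintro ⟨v, hvB, hv0, hv⟩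
    have heig : Module.End.HasEigenvalue α μ :=
      Module.End.hasEigenvalue_of_hasEigenvector
        (Module.End.hasEigenvector_iff.mpr ⟨Module.End.mem_eigenspace_iff.mpr hv, hv0⟩)
    refine ⟨heig, ?_⟩
    rw [hB i] at hvB
    obtain ⟨hker, hYv⟩ := Submodule.mem_inf.mp hvB
    have hfix : (α ^ ds i) v = v := by
      have h0 := hker
      rw [LinearMap.mem_ker, LinearMap.sub_apply, Module.End.one_apply, sub_eq_zero] at h0
      exact h0.symm
    have hμpow : μ ^ ds i = 1 := by
      have h2 : μ ^ ds i • v = v := by rw [← roan_eig_pow hv, hfix]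
      have h3 : (μ ^ ds i - 1) • v = 0 := by rw [sub_smul, one_smul, h2, sub_self]
      rcases smul_eq_zero.mp h3 with h | h
      · exact sub_eq_zero.mp h
      · exact absurd h hv0
    have hdvd : orderOf μ ∣ ds i := orderOf_dvd_of_pow_eq_one hμpow
    obtain ⟨j, hj⟩ := (horders (orderOf μ)).mp ⟨μ, heig, rfl⟩
    have hle : ds j ≤ ds i := Nat.le_of_dvd (hpos i) (hj ▸ hdvd)
    have hji : j ≤ i := hmono.le_iff_le.mp hle
    rcases lt_or_eq_of_le hji with hlt | heq
    · exfalso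
      have hkerj : v ∈ LinearMap.ker (1 - α ^ ds j) := by
        rw [LinearMap.mem_ker, LinearMap.sub_apply, Module.End.one_apply,
          roan_eig_pow hv, hj, pow_orderOf_eq_one, one_smul, sub_self]
      have hYvj : v ∈ Y (j.val + 1) :=
        hYle (j.val + 1) i.val (Nat.succ_le_of_lt (Fin.lt_def.mp hlt)) i.isLt.le hYv
      exact hv0 (hdisj j v hkerj hYvj)
    · rw [← heq]
      exact hj.symm
  · rintro ⟨heig, hord⟩
    obtain ⟨v, hv⟩ := heig.exists_hasEigenvector
    have hv0 : v ≠ 0 := hv.2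
    have hveq : α v = μ • v := Module.End.mem_eigenspace_iff.mp hv.1
    have hYmemv : ∀ n, n ≤ i.val → v ∈ Y n := by
      intro n
      induction n with
      | zero => intro _; rw [hY0]; exact Submodule.mem_top
      | succ n ih =>
        intro hn
        have hns : n < s := by have := i.isLt; omega
        have hYs' : Y (n + 1) = Submodule.map (1 - α ^ ds ⟨n, hns⟩) (Y n) := hYsucc ⟨n, hns⟩
        have hcne : (1 : ℂ) - μ ^ ds ⟨n, hns⟩ ≠ 0 := by
          intro hzero
          have h1 : μ ^ ds ⟨n, hns⟩ = 1 := (sub_eq_zero.mp hzero).symm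
          have h2 : ds i ∣ ds ⟨n, hns⟩ := hord ▸ orderOf_dvd_of_pow_eq_one h1
          have h3 : ds i ≤ ds ⟨n, hns⟩ := Nat.le_of_dvd (hpos _) h2
          have h4 : ds ⟨n, hns⟩ < ds i :=
            hmono (Fin.lt_def.mpr (Nat.lt_of_succ_le hn))
          omega
        rw [hYs']
        refine ⟨((1 : ℂ) - μ ^ ds ⟨n, hns⟩)⁻¹ • v,
          Submodule.smul_mem _ _ (ih (le_trans (Nat.le_succ n) hn)), ?_⟩
        rw [map_smul, LinearMap.sub_apply, Module.End.one_apply, roan_eig_pow hveq]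
        have hs2 : v - μ ^ ds ⟨n, hns⟩ • v = ((1 : ℂ) - μ ^ ds ⟨n, hns⟩) • v := by
          rw [sub_smul, one_smul]
        rw [hs2, smul_smul, inv_mul_cancel₀ hcne, one_smul]
    have hkeri : v ∈ LinearMap.ker (1 - α ^ ds i) := by
      rw [LinearMap.mem_ker, LinearMap.sub_apply, Module.End.one_apply,
        roan_eig_pow hveq, ← hord, pow_orderOf_eq_one, one_smul, sub_self]
    exact ⟨v, (hB i).symm ▸ Submodule.mem_inf.mpr ⟨hkeri, hYmemv i.val le_rfl⟩, hv0, hveq⟩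
end
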